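/- arXiv:1908.09275 — 3 statements merged into one kernel-verified Lean document; each statement's English description precedes it below -/
import Mathlib

section
/- For n×n real symmetric positive semi-definite matrices A, B and α > 0, the minimum over unitary matrices U of ‖A^α − B^α U‖_F equals (tr[A^{2α} + B^{2α} − 2 (A^α B^{2α} A^α)^{1/2}])^{1/2}. -/
open Classical in
/-- The positive semi-definite square root of a positive semi-definite real matrix
(junk value `0` if the matrix is not positive semi-definite). -/
noncomputable def psdSqrt {n : ℕ} (M : Matrix (Fin n) (Fin n) ℝ) : Matrix (Fin n) (Fin n) ℝ :=
  if h : M.PosSemidef then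
    (h.1.eigenvectorUnitary : Matrix (Fin n) (Fin n) ℝ) *
      Matrix.diagonal ((↑) ∘ (NNReal.sqrt ∘ Real.toNNReal) ∘ h.1.eigenvalues) *
      (star h.1.eigenvectorUnitary : Matrix (Fin n) (Fin n) ℝ)
  else 0

open Classical in
/-- The real power `M ^ r` of a symmetric real matrix, defined through the spectral
functional calculus: `M ^ r = U diag(λᵢ^r) Uᵀ` (with `0 ^ r = 0` for `r > 0`).
Junk value `0` if `M` is not symmetric. -/
noncomputable def matPow {n : ℕ} (M : Matrix (Fin n) (Fin n) ℝ) (r : ℝ) :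
    Matrix (Fin n) (Fin n) ℝ :=
  if h : M.IsHermitian then
    (h.eigenvectorUnitary : Matrix (Fin n) (Fin n) ℝ) *
      Matrix.diagonal (fun i => h.eigenvalues i ^ r) *
      (star h.eigenvectorUnitary : Matrix (Fin n) (Fin n) ℝ)
  else 0

/-- The Frobenius norm of a real matrix. -/
noncomputable def frobNorm {n : ℕ} (M : Matrix (Fin n) (Fin n) ℝ) : ℝ :=
  Real.sqrt (∑ i, ∑ j, (M i j) ^ 2)

section helpers

open Matrix

variable {n : ℕ}

lemma psd_transpose {M : Matrix (Fin n) (Fin n) ℝ} (hM : M.PosSemidef) : Mᵀ = M := by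
  rw [← Matrix.conjTranspose_eq_transpose_of_trivial]; exact hM.1

lemma matPow_posSemidef {A : Matrix (Fin n) (Fin n) ℝ} (hA : A.PosSemidef) (r : ℝ) :
    (matPow A r).PosSemidef := by
  rw [matPow, dif_pos hA.1]
  have hD : (Matrix.diagonal (fun i => hA.1.eigenvalues i ^ r)).PosSemidef :=
    Matrix.posSemidef_diagonal_iff.mpr fun i =>
      Real.rpow_nonneg (hA.eigenvalues_nonneg i) r
  simpa [Matrix.star_eq_conjTranspose] using hD.mul_mul_conjTranspose_same
    (hA.1.eigenvectorUnitary : Matrix (Fin n) (Fin n) ℝ)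

lemma matPow_mul_self {A : Matrix (Fin n) (Fin n) ℝ} (hA : A.PosSemidef) {α : ℝ}
    (hα : 0 < α) : matPow A α * matPow A α = matPow A (2 * α) := by
  rw [matPow, matPow, dif_pos hA.1, dif_pos hA.1]
  set Q : Matrix (Fin n) (Fin n) ℝ := (hA.1.eigenvectorUnitary : Matrix (Fin n) (Fin n) ℝ)
    with hQdef
  have hQ1' : (star hA.1.eigenvectorUnitary : Matrix (Fin n) (Fin n) ℝ) * Q = 1 := by
    rw [hQdef, ← Unitary.coe_star]
    exact_mod_cast Unitary.coe_star_mul_self hA.1.eigenvectorUnitary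
  set D : Matrix (Fin n) (Fin n) ℝ := Matrix.diagonal (fun i => hA.1.eigenvalues i ^ α)
  set S : Matrix (Fin n) (Fin n) ℝ :=
    (star hA.1.eigenvectorUnitary : Matrix (Fin n) (Fin n) ℝ)
  have hDD : D * D = Matrix.diagonal (fun i => hA.1.eigenvalues i ^ (2 * α)) := by
    have hfun : (fun i => hA.1.eigenvalues i ^ α * hA.1.eigenvalues i ^ α)
        = fun i => hA.1.eigenvalues i ^ (2 * α) := by
      funext i
      rw [two_mul]
      exact (Real.rpow_add' (hA.eigenvalues_nonneg i) (by positivity)).symm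
    rw [Matrix.diagonal_mul_diagonal, hfun]
  calc Q * D * S * (Q * D * S) = Q * D * (S * Q) * D * S := by noncomm_ring
    _ = Q * (D * D) * S := by rw [hQ1', Matrix.mul_one]; noncomm_ring
    _ = Q * Matrix.diagonal (fun i => hA.1.eigenvalues i ^ (2 * α)) * S := by rw [hDD]

lemma frobNorm_eq (M : Matrix (Fin n) (Fin n) ℝ) :
    frobNorm M = Real.sqrt (Mᵀ * M).trace := by
  rw [frobNorm]
  congr 1
  rw [Matrix.trace]
  simp only [Matrix.diag_apply, Matrix.mul_apply, Matrix.transpose_apply, ← pow_two]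
  exact Finset.sum_comm

lemma trace_expand {X Y U : Matrix (Fin n) (Fin n) ℝ} (hX : Xᵀ = X) (hY : Yᵀ = Y)
    (hU : U ∈ Matrix.unitaryGroup (Fin n) ℝ) :
    ((X - Y * U)ᵀ * (X - Y * U)).trace
      = (X * X).trace + (Y * Y).trace - 2 * (X * Y * U).trace := by
  have hUU : U * Uᵀ = 1 := by
    have := Matrix.mem_unitaryGroup_iff.mp hU
    rwa [Matrix.star_eq_conjTranspose, Matrix.conjTranspose_eq_transpose_of_trivial] at this
  have hexp : (X - Y * U)ᵀ * (X - Y * U)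
      = X * X - X * (Y * U) - (Y * U)ᵀ * X + (Y * U)ᵀ * (Y * U) := by
    rw [Matrix.transpose_sub, hX]
    noncomm_ring
  rw [hexp, Matrix.trace_add, Matrix.trace_sub, Matrix.trace_sub]
  have h1 : ((Y * U)ᵀ * (Y * U)).trace = (Y * Y).trace := by
    rw [Matrix.transpose_mul, hY]
    calc (Uᵀ * Y * (Y * U)).trace = (Uᵀ * (Y * Y * U)).trace := by rw [Matrix.mul_assoc,
          Matrix.mul_assoc]
      _ = (Y * Y * U * Uᵀ).trace := Matrix.trace_mul_comm _ _
      _ = (Y * Y).trace := by rw [Matrix.mul_assoc, hUU, Matrix.mul_one]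
  have h2 : ((Y * U)ᵀ * X).trace = (X * Y * U).trace := by
    have : ((Y * U)ᵀ * X)ᵀ = X * Y * U := by
      rw [Matrix.transpose_mul, Matrix.transpose_transpose, hX]
      noncomm_ring
    rw [← this, Matrix.trace_transpose]
  have h3 : (X * (Y * U)).trace = (X * Y * U).trace := by rw [Matrix.mul_assoc]
  rw [h1, h2, h3]
  ring

lemma coe_sqrt_toNNReal (x : ℝ) : ((NNReal.sqrt (Real.toNNReal x) : ℝ)) = Real.sqrt x := by
  rw [Real.sqrt]

lemma psdSqrt_posSemidef {P : Matrix (Fin n) (Fin n) ℝ} (hP : P.PosSemidef) :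
    (psdSqrt P).PosSemidef := by
  rw [psdSqrt, dif_pos hP]
  have hD : (Matrix.diagonal ((↑) ∘ (NNReal.sqrt ∘ Real.toNNReal) ∘ hP.1.eigenvalues) :
      Matrix (Fin n) (Fin n) ℝ).PosSemidef :=
    Matrix.posSemidef_diagonal_iff.mpr fun i => NNReal.coe_nonneg _
  simpa [Matrix.star_eq_conjTranspose] using hD.mul_mul_conjTranspose_same
    (hP.1.eigenvectorUnitary : Matrix (Fin n) (Fin n) ℝ)

lemma psdSqrt_mul_self {P : Matrix (Fin n) (Fin n) ℝ} (hP : P.PosSemidef) :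
    psdSqrt P * psdSqrt P = P := by
  rw [psdSqrt, dif_pos hP]
  set Q : Matrix (Fin n) (Fin n) ℝ := (hP.1.eigenvectorUnitary : Matrix (Fin n) (Fin n) ℝ)
  have hQmem : Q ∈ Matrix.unitaryGroup (Fin n) ℝ := hP.1.eigenvectorUnitary.2
  have hQ1' : star Q * Q = 1 := Matrix.mem_unitaryGroup_iff'.mp hQmem
  have hspec : P = Q * Matrix.diagonal hP.1.eigenvalues * star Q := by
    have := hP.1.spectral_theorem
    simpa using this
  set D : Matrix (Fin n) (Fin n) ℝ :=
    Matrix.diagonal ((↑) ∘ (NNReal.sqrt ∘ Real.toNNReal) ∘ hP.1.eigenvalues) with hD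
  have hDD : D * D = Matrix.diagonal hP.1.eigenvalues := by
    rw [hD, Matrix.diagonal_mul_diagonal]
    congr 1
    funext i
    simp only [Function.comp_apply, coe_sqrt_toNNReal]
    exact Real.mul_self_sqrt (hP.eigenvalues_nonneg i)
  have hsQ : (star hP.1.eigenvectorUnitary : Matrix (Fin n) (Fin n) ℝ) = star Q := rfl
  rw [hsQ]
  calc Q * D * star Q * (Q * D * star Q) = Q * D * (star Q * Q) * D * star Q := by noncomm_ring
    _ = Q * (D * D) * star Q := by rw [hQ1', Matrix.mul_one]; noncomm_ring
    _ = P := by rw [hDD, ← hspec]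

lemma trace_psd_mul_unitary_le {P W : Matrix (Fin n) (Fin n) ℝ}
    (hP : P.PosSemidef) (hW : W ∈ Matrix.unitaryGroup (Fin n) ℝ) :
    (P * W).trace ≤ P.trace := by
  set S := psdSqrt P with hSdef
  have hSS : S * S = P := psdSqrt_mul_self hP
  have hSsym : Sᵀ = S := psd_transpose (psdSqrt_posSemidef hP)
  have hWW : Wᵀ * W = 1 := by
    have := Matrix.mem_unitaryGroup_iff'.mp hW
    rwa [Matrix.star_eq_conjTranspose, Matrix.conjTranspose_eq_transpose_of_trivial] at this
  have key : ∀ i, (S * W * S) i i ≤ P i i := by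
    intro i
    set v : Fin n → ℝ := fun j => S i j with hv
    have hvS : ∀ k, S k i = v k := by
      intro k
      show S k i = S i k
      rw [← Matrix.transpose_apply S i k, hSsym]
    have hentry : (S * W * S) i i = v ⬝ᵥ (W *ᵥ v) := by
      simp only [Matrix.mul_apply, dotProduct, Matrix.mulVec, Finset.sum_mul,
        Finset.mul_sum, hvS]
      rw [Finset.sum_comm]
      apply Finset.sum_congr rfl
      intro k _
      apply Finset.sum_congr rfl
      intro j _
      ring
    have hWv : (W *ᵥ v) ⬝ᵥ (W *ᵥ v) = v ⬝ᵥ v := by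
      rw [dotProduct_mulVec, ← Matrix.mulVec_transpose, Matrix.mulVec_mulVec, hWW,
        Matrix.one_mulVec]
    have hvv : v ⬝ᵥ v = P i i := by
      rw [← hSS, Matrix.mul_apply, dotProduct]
      apply Finset.sum_congr rfl
      intro k _
      rw [hvS k]
    have hcs : (v ⬝ᵥ (W *ᵥ v)) ^ 2 ≤ (v ⬝ᵥ v) ^ 2 := by
      have h1 := Finset.sum_mul_sq_le_sq_mul_sq Finset.univ v (W *ᵥ v)
      have h2 : ∑ j, (W *ᵥ v) j ^ 2 = ∑ j, v j ^ 2 := by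
        have := hWv
        simpa only [dotProduct, ← pow_two] using this
      calc (v ⬝ᵥ (W *ᵥ v)) ^ 2 = (∑ j, v j * (W *ᵥ v) j) ^ 2 := rfl
        _ ≤ (∑ j, v j ^ 2) * ∑ j, (W *ᵥ v) j ^ 2 := h1
        _ = (∑ j, v j ^ 2) * ∑ j, v j ^ 2 := by rw [h2]
        _ = (v ⬝ᵥ v) ^ 2 := by rw [pow_two]; congr 1 <;>
              simp [dotProduct, pow_two]
    have hvvnn : 0 ≤ v ⬝ᵥ v := by
      simp only [dotProduct]
      exact Finset.sum_nonneg fun j _ => mul_self_nonneg _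
    rw [hentry, ← hvv]
    calc v ⬝ᵥ (W *ᵥ v) ≤ |v ⬝ᵥ (W *ᵥ v)| := le_abs_self _
      _ = Real.sqrt ((v ⬝ᵥ (W *ᵥ v)) ^ 2) := (Real.sqrt_sq_eq_abs _).symm
      _ ≤ Real.sqrt ((v ⬝ᵥ v) ^ 2) := Real.sqrt_le_sqrt hcs
      _ = |v ⬝ᵥ v| := Real.sqrt_sq_eq_abs _
      _ = v ⬝ᵥ v := abs_of_nonneg hvvnn
  calc (P * W).trace = (S * (S * W)).trace := by rw [← hSS, Matrix.mul_assoc]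
    _ = (S * W * S).trace := by rw [Matrix.trace_mul_comm]
    _ ≤ P.trace := Finset.sum_le_sum fun i _ => key i

lemma polar_decomp (M : Matrix (Fin n) (Fin n) ℝ) :
    ∃ V ∈ Matrix.unitaryGroup (Fin n) ℝ, M = psdSqrt (M * Mᵀ) * V := by
  classical
  have hH : (M * Mᵀ).PosSemidef := by
    simpa [Matrix.conjTranspose_eq_transpose_of_trivial] using
      M.posSemidef_self_mul_conjTranspose
  set d : Fin n → ℝ := hH.1.eigenvalues with hd
  have hd0 : ∀ i, 0 ≤ d i := hH.eigenvalues_nonneg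
  set Q : Matrix (Fin n) (Fin n) ℝ := (hH.1.eigenvectorUnitary : Matrix (Fin n) (Fin n) ℝ)
    with hQdef
  have hQmem : Q ∈ Matrix.unitaryGroup (Fin n) ℝ := hH.1.eigenvectorUnitary.2
  have hQ1 : Q * star Q = 1 := Matrix.mem_unitaryGroup_iff.mp hQmem
  have hQ1' : star Q * Q = 1 := Matrix.mem_unitaryGroup_iff'.mp hQmem
  have hspec : M * Mᵀ = Q * Matrix.diagonal d * star Q := by
    have := hH.1.spectral_theorem
    simpa using this
  set N : Matrix (Fin n) (Fin n) ℝ := star Q * M with hN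
  have hQM : Q * N = M := by
    rw [hN, ← Matrix.mul_assoc, hQ1, Matrix.one_mul]
  have hNt : Nᵀ = Mᵀ * Q := by
    rw [hN, Matrix.transpose_mul, Matrix.star_eq_conjTranspose,
      Matrix.conjTranspose_eq_transpose_of_trivial, Matrix.transpose_transpose]
  have hNNt : N * Nᵀ = Matrix.diagonal d := by
    calc N * Nᵀ = star Q * (M * Mᵀ) * Q := by rw [hN, hNt]; noncomm_ring
      _ = (star Q * Q) * Matrix.diagonal d * (star Q * Q) := by rw [hspec]; noncomm_ring
      _ = Matrix.diagonal d := by rw [hQ1', Matrix.one_mul, Matrix.mul_one]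
  have hrow0 : ∀ i, d i = 0 → ∀ j, N i j = 0 := by
    intro i hdi j
    have hsum : ∑ k, N i k * N i k = 0 := by
      have h := congrFun (congrFun hNNt i) i
      simpa [Matrix.mul_apply, Matrix.diagonal_apply_eq, hdi] using h
    have hz := (Finset.sum_eq_zero_iff_of_nonneg
      (fun k _ => mul_self_nonneg (N i k))).mp hsum j (Finset.mem_univ j)
    exact mul_self_eq_zero.mp hz
  -- rows as Euclidean vectors
  set w : Fin n → EuclideanSpace ℝ (Fin n) :=
    fun i => (Real.sqrt (d i))⁻¹ • ((WithLp.equiv 2 (Fin n → ℝ)).symm (N i)) with hw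
  have hwapply : ∀ i j, w i j = (Real.sqrt (d i))⁻¹ * N i j := by
    intro i j
    rw [hw]
    simp
  set s : Set (Fin n) := {i | d i ≠ 0} with hs
  have hinner : ∀ i j : Fin n, (inner ℝ (w i) (w j) : ℝ)
      = (Real.sqrt (d i))⁻¹ * (Real.sqrt (d j))⁻¹ * Matrix.diagonal d i j := by
    intro i j
    have hdij : Matrix.diagonal d i j = ∑ k, N i k * N j k := by
      have h := congrFun (congrFun hNNt i) j
      rw [← h]
      simp [Matrix.mul_apply]
    rw [PiLp.inner_apply, hdij, Finset.mul_sum]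
    apply Finset.sum_congr rfl
    intro k _
    rw [RCLike.inner_apply, conj_trivial, hwapply, hwapply]
    ring
  have horth : Orthonormal ℝ (s.restrict w) := by
    rw [orthonormal_iff_ite]
    rintro ⟨i, hi⟩ ⟨j, hj⟩
    change inner ℝ (w i) (w j) = if (⟨i, hi⟩ : s) = ⟨j, hj⟩ then 1 else 0
    by_cases hij : i = j
    · subst hij
      have hdi : 0 < d i := lt_of_le_of_ne (hd0 i) (Ne.symm hi)
      have hsq : Real.sqrt (d i) * Real.sqrt (d i) = d i := Real.mul_self_sqrt (hd0 i)
      have hsn : Real.sqrt (d i) ≠ 0 := by positivity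
      rw [hinner, Matrix.diagonal_apply_eq, if_pos rfl, ← hsq]
      field_simp
      rw [Real.sqrt_sq (Real.sqrt_nonneg _)]
    · rw [hinner, Matrix.diagonal_apply_ne _ hij,
        if_neg (fun h => hij (congrArg Subtype.val h))]
      ring
  obtain ⟨b, hb⟩ := horth.exists_orthonormalBasis_extension_of_card_eq
    (by simp [finrank_euclideanSpace])
  set W : Matrix (Fin n) (Fin n) ℝ := Matrix.of (fun i j => b i j) with hW
  have hWmem : W ∈ Matrix.unitaryGroup (Fin n) ℝ := by
    rw [Matrix.mem_unitaryGroup_iff]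
    ext i j
    have hbij := orthonormal_iff_ite.mp b.orthonormal i j
    rw [PiLp.inner_apply] at hbij
    simp only [RCLike.inner_apply, conj_trivial] at hbij
    rw [Matrix.mul_apply, Matrix.one_apply]
    rw [Matrix.star_eq_conjTranspose, Matrix.conjTranspose_eq_transpose_of_trivial]
    simpa [hW, Matrix.transpose_apply, mul_comm] using hbij
  have hkey : Matrix.diagonal (fun i => Real.sqrt (d i)) * W = N := by
    ext i j
    rw [Matrix.diagonal_mul]
    by_cases hdi : d i = 0
    · simp [hdi, Real.sqrt_zero, hrow0 i hdi j]
    · have hbi : b i = w i := hb i hdi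
      rw [hW, Matrix.of_apply, hbi, hwapply]
      have hdipos : 0 < d i := lt_of_le_of_ne (hd0 i) (Ne.symm hdi)
      have hsn : Real.sqrt (d i) ≠ 0 := by positivity
      rw [← mul_assoc, mul_inv_cancel₀ hsn, one_mul]
  set D : Matrix (Fin n) (Fin n) ℝ := Matrix.diagonal (fun i => Real.sqrt (d i)) with hD
  have hPpsd : (Q * D * star Q).PosSemidef := by
    have hDpsd : D.PosSemidef := Matrix.posSemidef_diagonal_iff.mpr
      fun i => Real.sqrt_nonneg _
    simpa [Matrix.star_eq_conjTranspose] using hDpsd.mul_mul_conjTranspose_same Q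
  have hP2 : (Q * D * star Q) ^ 2 = M * Mᵀ := by
    have hDD : D * D = Matrix.diagonal d := by
      have hfun : (fun i => Real.sqrt (d i) * Real.sqrt (d i)) = d := by
        funext i
        exact Real.mul_self_sqrt (hd0 i)
      rw [hD, Matrix.diagonal_mul_diagonal, hfun]
    calc (Q * D * star Q) ^ 2 = Q * D * (star Q * Q) * D * star Q := by
          rw [pow_two]; noncomm_ring
      _ = Q * (D * D) * star Q := by rw [hQ1', Matrix.mul_one]; noncomm_ring
      _ = Q * Matrix.diagonal d * star Q := by rw [hDD]
      _ = M * Mᵀ := hspec.symm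
  have hsqrt : psdSqrt (M * Mᵀ) = Q * D * star Q := by
    rw [psdSqrt, dif_pos hH]
    have hfD : ((↑) ∘ (NNReal.sqrt ∘ Real.toNNReal) ∘ hH.1.eigenvalues : Fin n → ℝ)
        = fun i => Real.sqrt (d i) := by
      funext i
      exact coe_sqrt_toNNReal _
    rw [hfD]
  refine ⟨Q * W, mul_mem hQmem hWmem, ?_⟩
  rw [hsqrt]
  calc M = Q * N := hQM.symm
    _ = Q * (D * W) := by rw [hkey]
    _ = Q * D * (star Q * Q) * W := by rw [hQ1', Matrix.mul_one]; noncomm_ring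
    _ = Q * D * star Q * (Q * W) := by noncomm_ring

end helpers

open Matrix in

/-- For positive semi-definite `A, B` and `α > 0`, the minimum over unitary `U` of
`‖A^α − B^α U‖_F` equals `(tr[A^{2α} + B^{2α} − 2 (A^α B^{2α} A^α)^{1/2}])^{1/2}`. -/
theorem stmt2 {n : ℕ} (A B : Matrix (Fin n) (Fin n) ℝ)
    (hA : A.PosSemidef) (hB : B.PosSemidef) (α : ℝ) (hα : 0 < α) :
    IsLeast {r : ℝ | ∃ U ∈ Matrix.unitaryGroup (Fin n) ℝ,
        r = frobNorm (matPow A α - matPow B α * U)}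
      (Real.sqrt ((matPow A (2 * α) + matPow B (2 * α)
          - 2 • psdSqrt (matPow A α * matPow B (2 * α) * matPow A α)).trace)) := by
  classical
  set X := matPow A α with hXdef
  set Y := matPow B α with hYdef
  have hXpsd := matPow_posSemidef hA α
  have hYpsd := matPow_posSemidef hB α
  have hXsym : Xᵀ = X := psd_transpose hXpsd
  have hYsym : Yᵀ = Y := psd_transpose hYpsd
  have hXX : X * X = matPow A (2 * α) := matPow_mul_self hA hα
  have hYY : Y * Y = matPow B (2 * α) := matPow_mul_self hB hα
  set M := X * Y with hMdef
  have hMMt : M * Mᵀ = X * matPow B (2 * α) * X := by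
    rw [hMdef, Matrix.transpose_mul, hXsym, hYsym, ← hYY]
    noncomm_ring
  obtain ⟨V, hV, hpolar⟩ := polar_decomp M
  set P := psdSqrt (M * Mᵀ) with hPdef
  have hPgoal : psdSqrt (X * matPow B (2 * α) * X) = P := by rw [hPdef, hMMt]
  have hMMtpsd : (M * Mᵀ).PosSemidef := by
    simpa [Matrix.conjTranspose_eq_transpose_of_trivial] using
      M.posSemidef_self_mul_conjTranspose
  have hPpsd : P.PosSemidef := by
    rw [hPdef]
    exact psdSqrt_posSemidef hMMtpsd
  have hVstar : V * star V = 1 := Matrix.mem_unitaryGroup_iff.mp hV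
  have htraceval : (matPow A (2 * α) + matPow B (2 * α)
      - 2 • psdSqrt (X * matPow B (2 * α) * X)).trace
      = (X * X).trace + (Y * Y).trace - 2 * P.trace := by
    rw [hPgoal, ← hXX, ← hYY, Matrix.trace_sub, Matrix.trace_add, Matrix.trace_smul]
    simp [nsmul_eq_mul]
  constructor
  · refine ⟨star V, Unitary.star_mem hV, ?_⟩
    have htr : (X * Y * star V).trace = P.trace := by
      calc (X * Y * star V).trace = (P * V * star V).trace := by rw [← hMdef, hpolar]
        _ = P.trace := by rw [Matrix.mul_assoc, hVstar, Matrix.mul_one]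
    rw [frobNorm_eq, htraceval, trace_expand hXsym hYsym (Unitary.star_mem hV), htr]
  · rintro r ⟨U, hU, rfl⟩
    rw [frobNorm_eq, htraceval]
    apply Real.sqrt_le_sqrt
    rw [trace_expand hXsym hYsym hU]
    have hle : (X * Y * U).trace ≤ P.trace := by
      have heq : X * Y * U = P * (V * U) := by
        rw [← hMdef, hpolar, Matrix.mul_assoc]
      rw [heq]
      exact trace_psd_mul_unitary_le hPpsd (mul_mem hV hU)
    linarith
end

section
/- Let H be a separable Hilbert space, A a self-adjoint Hilbert–Schmidt operator with I + A positive definite, and α ∈ ℝ. Then (I+A)^α = I + C for some self-adjoint Hilbert–Schmidt operator C, with ‖C‖_HS ≤ exp(|α| ‖log(I+A)‖_HS) − 1. -/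
open scoped RealInnerProductSpace

variable {H : Type*} [NormedAddCommGroup H] [InnerProductSpace ℝ H]

/-- `T` is a Hilbert–Schmidt operator (relative to the Hilbert basis `b`; the notion is in fact
independent of the choice of basis). -/
def IsHS (b : HilbertBasis ℕ ℝ H) (T : H →L[ℝ] H) : Prop :=
  Summable fun i => ‖T (b i)‖ ^ 2

/-- `T` is a trace class operator: it factors as a product of two Hilbert–Schmidt operators. -/
def IsTC (b : HilbertBasis ℕ ℝ H) (T : H →L[ℝ] H) : Prop :=
  ∃ R S : H →L[ℝ] H, IsHS b R ∧ IsHS b S ∧ T = R * S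

/-- The Hilbert–Schmidt norm of an operator. -/
noncomputable def hsNorm (b : HilbertBasis ℕ ℝ H) (T : H →L[ℝ] H) : ℝ :=
  Real.sqrt (∑' i, ‖T (b i)‖ ^ 2)

/-- The trace of an operator, as the sum `∑ ⟪T eᵢ, eᵢ⟫` over the Hilbert basis `b`. -/
noncomputable def opTrace (b : HilbertBasis ℕ ℝ H) (T : H →L[ℝ] H) : ℝ :=
  ∑' i, ⟪T (b i), b i⟫

open Classical in
/-- The positive square root of a positive operator `T` (the unique positive operator whose
square is `T`); junk value `0` if no positive square root exists. -/
noncomputable def posSqrt [CompleteSpace H] (T : H →L[ℝ] H) : H →L[ℝ] H :=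
  if h : ∃ S : H →L[ℝ] H, S.IsPositive ∧ S * S = T then h.choose else 0

set_option maxHeartbeats 1000000 in
set_option synthInstance.maxHeartbeats 400000 in
/-- If `A` is self-adjoint Hilbert–Schmidt with `I + A` positive definite, and
`L = log(I + A)` (a self-adjoint Hilbert–Schmidt operator with `exp L = I + A`), then for any
`α ∈ ℝ`, `(I+A)^α = exp(α L) = I + C` with `C` self-adjoint Hilbert–Schmidt and
`‖C‖_HS ≤ exp(|α| ‖L‖_HS) − 1`. -/
theorem stmt15 [CompleteSpace H] (b : HilbertBasis ℕ ℝ H)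
    (A : H →L[ℝ] H) (hA : IsHS b A) (hsA : IsSelfAdjoint A)
    (hpA : ∃ c > (0 : ℝ), ∀ x : H, c * ‖x‖ ^ 2 ≤ ⟪(1 + A) x, x⟫)
    (α : ℝ) (L : H →L[ℝ] H) (hL : IsHS b L) (hsL : IsSelfAdjoint L)
    (hexp : NormedSpace.exp L = 1 + A) :
    ∃ C : H →L[ℝ] H, IsHS b C ∧ IsSelfAdjoint C ∧
      NormedSpace.exp (α • L) = 1 + C ∧
      hsNorm b C ≤ Real.exp (|α| * hsNorm b L) - 1 := by
  classical
  set s : ℝ := hsNorm b L with hs_def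
  have hS0 : (0:ℝ) ≤ ∑' i, ‖L (b i)‖ ^ 2 := tsum_nonneg fun i => by positivity
  have hs0 : 0 ≤ s := Real.sqrt_nonneg _
  have hs_sq : s ^ 2 = ∑' i, ‖L (b i)‖ ^ 2 := Real.sq_sqrt hS0
  -- pointwise bound ‖L x‖ ≤ s * ‖x‖
  have hLx : ∀ x : H, ‖L x‖ ≤ s * ‖x‖ := by
    intro x
    have hsym := hsL.isSymmetric
    have hps : HasSum (fun i => ⟪L x, b i⟫ * ⟪b i, L x⟫) ⟪L x, L x⟫ :=
      b.hasSum_inner_mul_inner (L x) (L x)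
    have hsq : ‖L x‖ ^ 2 ≤ (s * ‖x‖) ^ 2 := by
      have h1 : ‖L x‖ ^ 2 = ∑' i, ⟪L x, b i⟫ * ⟪b i, L x⟫ := by
        rw [hps.tsum_eq, real_inner_self_eq_norm_sq]
      have hterm : ∀ i, ⟪L x, b i⟫ * ⟪b i, L x⟫ ≤ ‖x‖ ^ 2 * ‖L (b i)‖ ^ 2 := by
        intro i
        have h2 : ⟪L x, b i⟫ = ⟪x, L (b i)⟫ := hsym x (b i)
        have h3 : ⟪b i, L x⟫ = ⟪x, L (b i)⟫ := by
          rw [real_inner_comm]; exact hsym x (b i)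
        rw [h2, h3]
        calc ⟪x, L (b i)⟫ * ⟪x, L (b i)⟫ ≤ ⟪x, x⟫ * ⟪L (b i), L (b i)⟫ :=
              real_inner_mul_inner_self_le x (L (b i))
          _ = ‖x‖ ^ 2 * ‖L (b i)‖ ^ 2 := by
              rw [real_inner_self_eq_norm_sq, real_inner_self_eq_norm_sq]
      calc ‖L x‖ ^ 2 = ∑' i, ⟪L x, b i⟫ * ⟪b i, L x⟫ := h1
        _ ≤ ∑' i, ‖x‖ ^ 2 * ‖L (b i)‖ ^ 2 :=
            Summable.tsum_le_tsum hterm hps.summable (hL.mul_left _)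
        _ = ‖x‖ ^ 2 * ∑' i, ‖L (b i)‖ ^ 2 := tsum_mul_left
        _ = (s * ‖x‖) ^ 2 := by rw [← hs_sq]; ring
    calc ‖L x‖ = Real.sqrt (‖L x‖ ^ 2) := (Real.sqrt_sq (norm_nonneg _)).symm
      _ ≤ Real.sqrt ((s * ‖x‖) ^ 2) := Real.sqrt_le_sqrt hsq
      _ = s * ‖x‖ := Real.sqrt_sq (by positivity)
  -- pointwise bound for powers
  have hLpow : ∀ (n : ℕ) (x : H), ‖(L ^ n) x‖ ≤ s ^ n * ‖x‖ := by
    intro n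
    induction n with
    | zero => intro x; simp
    | succ n ih =>
      intro x
      have h1 : (L ^ (n+1)) x = (L ^ n) (L x) := by
        rw [pow_succ]; rfl
      rw [h1]
      calc ‖(L ^ n) (L x)‖ ≤ s ^ n * ‖L x‖ := ih (L x)
        _ ≤ s ^ n * (s * ‖x‖) := by
            exact mul_le_mul_of_nonneg_left (hLx x) (by positivity)
        _ = s ^ (n+1) * ‖x‖ := by ring
  set X : H →L[ℝ] H := α • L with hX_def
  set C : H →L[ℝ] H := NormedSpace.exp X - 1 with hC_def
  have hsum : Summable fun n : ℕ => ((Nat.factorial n : ℝ)⁻¹) • X ^ n :=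
    NormedSpace.expSeries_summable' (𝕂 := ℝ) X
  -- the coefficient sequence
  set g : ℕ → ℝ := fun n => ((Nat.factorial (n+1) : ℝ))⁻¹ * (|α| ^ (n+1) * s ^ n) with hg_def
  have hg0 : ∀ n, 0 ≤ g n := fun n => by positivity
  have hg_sum : Summable g := by
    refine Summable.of_nonneg_of_le hg0 (fun n => ?_)
      ((Real.summable_pow_div_factorial (|α| * s)).mul_left |α|)
    ·
      have hfac : (Nat.factorial n : ℝ) ≤ (Nat.factorial (n+1) : ℝ) := by
        exact_mod_cast Nat.factorial_le (Nat.le_succ n)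
      have hfac0 : (0:ℝ) < (Nat.factorial n : ℝ) := by exact_mod_cast Nat.factorial_pos n
      have hinv : ((Nat.factorial (n+1) : ℝ))⁻¹ ≤ ((Nat.factorial n : ℝ))⁻¹ :=
        inv_anti₀ hfac0 hfac
      calc g n ≤ ((Nat.factorial n : ℝ))⁻¹ * (|α| ^ (n+1) * s ^ n) :=
            mul_le_mul_of_nonneg_right hinv (by positivity)
        _ = |α| * ((|α| * s) ^ n / (Nat.factorial n : ℝ)) := by
            rw [mul_pow, pow_succ]; ring
  set K : ℝ := ∑' n, g n with hK_def
  have hK0 : 0 ≤ K := tsum_nonneg hg0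
  -- pointwise series representation of C
  have hCx : ∀ x : H, C x = ∑' n : ℕ, ((Nat.factorial (n+1) : ℝ))⁻¹ • (X ^ (n+1)) x := by
    intro x
    have φdef : ∀ T : H →L[ℝ] H, (ContinuousLinearMap.apply ℝ H x) T = T x := fun _ => rfl
    have hmap : NormedSpace.exp X x = ∑' n : ℕ, ((Nat.factorial n : ℝ)⁻¹) • (X ^ n) x := by
      rw [NormedSpace.exp_eq_tsum (𝕂 := ℝ)]
      have := (ContinuousLinearMap.apply ℝ H x).map_tsum hsum
      simpa [φdef] using this
    have hsum' : Summable fun n : ℕ => ((Nat.factorial n : ℝ)⁻¹) • (X ^ n) x := by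
      have := hsum.map (ContinuousLinearMap.apply ℝ H x)
        (ContinuousLinearMap.apply ℝ H x).continuous
      exact this
    have hsplit : (∑' n : ℕ, ((Nat.factorial n : ℝ)⁻¹) • (X ^ n) x)
        = ((Nat.factorial 0 : ℝ)⁻¹) • (X ^ 0) x + ∑' n : ℕ, ((Nat.factorial (n+1) : ℝ)⁻¹) • (X ^ (n+1)) x :=
      Summable.tsum_eq_zero_add hsum'
    have h0 : ((Nat.factorial 0 : ℝ)⁻¹) • (X ^ 0) x = x := by simp
    have : C x = NormedSpace.exp X x - x := by
      simp [hC_def, ContinuousLinearMap.sub_apply]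
    rw [this, hmap, hsplit, h0]
    abel
  -- summability of the term norms and pointwise bound for C
  have hterm_bound : ∀ (x : H) (n : ℕ),
      ‖((Nat.factorial (n+1) : ℝ))⁻¹ • (X ^ (n+1)) x‖ ≤ g n * ‖L x‖ := by
    intro x n
    have hXpow : (X ^ (n+1)) x = α ^ (n+1) • (L ^ (n+1)) x := by
      rw [hX_def, smul_pow]; rfl
    have h1 : (L ^ (n+1)) x = (L ^ n) (L x) := by rw [pow_succ]; rfl
    have h2 : ‖(L ^ (n+1)) x‖ ≤ s ^ n * ‖L x‖ := by
      rw [h1]; exact hLpow n (L x)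
    have hfac0 : (0:ℝ) ≤ ((Nat.factorial (n+1) : ℝ))⁻¹ := by positivity
    calc ‖((Nat.factorial (n+1) : ℝ))⁻¹ • (X ^ (n+1)) x‖
        = ((Nat.factorial (n+1) : ℝ))⁻¹ * (|α| ^ (n+1) * ‖(L ^ (n+1)) x‖) := by
          rw [norm_smul, hXpow, norm_smul, Real.norm_eq_abs, Real.norm_eq_abs,
            abs_of_nonneg hfac0, abs_pow]
      _ ≤ ((Nat.factorial (n+1) : ℝ))⁻¹ * (|α| ^ (n+1) * (s ^ n * ‖L x‖)) := by
          apply mul_le_mul_of_nonneg_left _ hfac0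
          exact mul_le_mul_of_nonneg_left h2 (by positivity)
      _ = g n * ‖L x‖ := by rw [hg_def]; ring
  have hterm_summable : ∀ x : H,
      Summable fun n : ℕ => ‖((Nat.factorial (n+1) : ℝ))⁻¹ • (X ^ (n+1)) x‖ := by
    intro x
    exact Summable.of_nonneg_of_le (fun n => norm_nonneg _) (hterm_bound x)
      (hg_sum.mul_right _)
  have hCbound : ∀ x : H, ‖C x‖ ≤ K * ‖L x‖ := by
    intro x
    calc ‖C x‖ = ‖∑' n : ℕ, ((Nat.factorial (n+1) : ℝ))⁻¹ • (X ^ (n+1)) x‖ := by rw [hCx x]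
      _ ≤ ∑' n : ℕ, ‖((Nat.factorial (n+1) : ℝ))⁻¹ • (X ^ (n+1)) x‖ :=
          norm_tsum_le_tsum_norm (hterm_summable x)
      _ ≤ ∑' n : ℕ, g n * ‖L x‖ :=
          Summable.tsum_le_tsum (hterm_bound x) (hterm_summable x) (hg_sum.mul_right _)
      _ = K * ‖L x‖ := tsum_mul_right
  refine ⟨C, ?_, ?_, ?_, ?_⟩
  · -- IsHS
    refine Summable.of_nonneg_of_le (fun i => by positivity) (fun i => ?_)
      (hL.mul_left (K ^ 2))
    calc ‖C (b i)‖ ^ 2 ≤ (K * ‖L (b i)‖) ^ 2 :=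
          pow_le_pow_left₀ (norm_nonneg _) (hCbound (b i)) 2
      _ = K ^ 2 * ‖L (b i)‖ ^ 2 := by ring
  · -- self-adjoint
    have hsX : IsSelfAdjoint X := (IsSelfAdjoint.all α).smul hsL
    exact hsX.exp.sub (IsSelfAdjoint.one _)
  · -- exp = 1 + C
    rw [hC_def]; abel
  · -- norm bound
    have hCenorm : hsNorm b C ≤ K * s := by
      have h1 : (∑' i, ‖C (b i)‖ ^ 2) ≤ ∑' i, K ^ 2 * ‖L (b i)‖ ^ 2 := by
        apply Summable.tsum_le_tsum _ _ (hL.mul_left _)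
        · intro i
          calc ‖C (b i)‖ ^ 2 ≤ (K * ‖L (b i)‖) ^ 2 :=
                pow_le_pow_left₀ (norm_nonneg _) (hCbound (b i)) 2
            _ = K ^ 2 * ‖L (b i)‖ ^ 2 := by ring
        · refine Summable.of_nonneg_of_le (fun i => by positivity) (fun i => ?_)
            (hL.mul_left (K ^ 2))
          calc ‖C (b i)‖ ^ 2 ≤ (K * ‖L (b i)‖) ^ 2 :=
                pow_le_pow_left₀ (norm_nonneg _) (hCbound (b i)) 2
            _ = K ^ 2 * ‖L (b i)‖ ^ 2 := by ring
      calc hsNorm b C = Real.sqrt (∑' i, ‖C (b i)‖ ^ 2) := rfl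
        _ ≤ Real.sqrt (∑' i, K ^ 2 * ‖L (b i)‖ ^ 2) := Real.sqrt_le_sqrt h1
        _ = Real.sqrt (K ^ 2 * ∑' i, ‖L (b i)‖ ^ 2) := by rw [tsum_mul_left]
        _ = K * s := by
            rw [← hs_sq, ← mul_pow, Real.sqrt_sq (by positivity)]
    have hKs : K * s = Real.exp (|α| * s) - 1 := by
      have hexp_sum : Summable fun n : ℕ => (|α| * s) ^ n / (Nat.factorial n : ℝ) :=
        Real.summable_pow_div_factorial _
      have hexp_eq : Real.exp (|α| * s) = ∑' n : ℕ, (|α| * s) ^ n / (Nat.factorial n : ℝ) := by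
        rw [Real.exp_eq_exp_ℝ, NormedSpace.exp_eq_tsum_div]
      have hsplit : (∑' n : ℕ, (|α| * s) ^ n / (Nat.factorial n : ℝ))
          = (|α| * s) ^ 0 / Nat.factorial 0 + ∑' n : ℕ, (|α| * s) ^ (n+1) / Nat.factorial (n+1) :=
        Summable.tsum_eq_zero_add hexp_sum
      have hterm : ∀ n : ℕ, g n * s = (|α| * s) ^ (n+1) / (Nat.factorial (n+1) : ℝ) := by
        intro n
        rw [hg_def, mul_pow, pow_succ]
        ring
      calc K * s = ∑' n, g n * s := tsum_mul_right.symm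
        _ = ∑' n : ℕ, (|α| * s) ^ (n+1) / (Nat.factorial (n+1) : ℝ) := by
            exact tsum_congr hterm
        _ = Real.exp (|α| * s) - 1 := by
            rw [hexp_eq, hsplit]; simp
    rw [← hKs] at *
    exact hCenorm
end

section
/- Let A be a self-adjoint Hilbert–Schmidt operator on a separable Hilbert space H with I + A positive definite. Then lim_{α→0} (1/α²)(‖(I+A)^α‖²_{eHS} − 1) = ‖log(I+A)‖²_{HS}, where ‖B + γI‖²_{eHS} = ‖B‖²_{HS} + γ² is the extended Hilbert–Schmidt norm. Equivalently, lim_{α→0} ‖(I+A)^α − I‖²_{HS}/α² = ‖log(I+A)‖²_{HS}. -/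
open scoped RealInnerProductSpace

variable {H : Type*} [NormedAddCommGroup H] [InnerProductSpace ℝ H]

open Topology

noncomputable def myP [CompleteSpace H] (L : H →L[ℝ] H) (α : ℝ) : H →L[ℝ] H :=
  ∑' n : ℕ, (α ^ (n + 2) / ((n+2).factorial : ℝ) : ℝ) • L ^ (n + 1)

lemma myP_term_norm_le [CompleteSpace H] (L : H →L[ℝ] H) (α : ℝ) (n : ℕ) :
    ‖(α ^ (n + 2) / ((n+2).factorial : ℝ) : ℝ) • L ^ (n + 1)‖ ≤
      (|α| * (‖L‖ + 1)) ^ (n + 2) / ((n+2).factorial : ℝ) := by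
  rw [norm_smul (α ^ (n + 2) / ((n+2).factorial : ℝ)) (L ^ (n + 1))]
  have h1 : ‖L ^ (n + 1)‖ ≤ (‖L‖ + 1) ^ (n + 2) := by
    calc ‖L ^ (n + 1)‖ ≤ ‖L‖ ^ (n + 1) := norm_pow_le' L (Nat.succ_pos n)
      _ ≤ (‖L‖ + 1) ^ (n + 1) := by
          exact pow_le_pow_left₀ (norm_nonneg _) (by linarith) _
      _ ≤ (‖L‖ + 1) ^ (n + 2) := by
          exact pow_le_pow_right₀ (by linarith [norm_nonneg L]) (by omega)
  have h2 : |α ^ (n + 2) / ((n+2).factorial : ℝ)| = |α| ^ (n + 2) / ((n+2).factorial : ℝ) := by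
    rw [abs_div, abs_pow, Nat.abs_cast]
  rw [Real.norm_eq_abs, h2, mul_pow, div_mul_eq_mul_div]
  gcongr

lemma myP_summable_norm [CompleteSpace H] (L : H →L[ℝ] H) (α : ℝ) :
    Summable fun n : ℕ => ‖(α ^ (n + 2) / ((n+2).factorial : ℝ) : ℝ) • L ^ (n + 1)‖ := by
  apply Summable.of_nonneg_of_le (fun n => norm_nonneg _) (myP_term_norm_le L α)
  exact (summable_nat_add_iff 2).mpr (Real.summable_pow_div_factorial _)

lemma myP_summable [CompleteSpace H] (L : H →L[ℝ] H) (α : ℝ) :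
    Summable fun n : ℕ => (α ^ (n + 2) / ((n+2).factorial : ℝ) : ℝ) • L ^ (n + 1) :=
  (myP_summable_norm L α).of_norm

lemma myP_norm_le [CompleteSpace H] (L : H →L[ℝ] H) (α : ℝ) :
    ‖myP L α‖ ≤ (|α| * (‖L‖ + 1)) ^ 2 * Real.exp (|α| * (‖L‖ + 1)) := by
  set c := |α| * (‖L‖ + 1) with hc
  have hc0 : 0 ≤ c := by positivity
  have hsum : Summable fun n : ℕ => c ^ (n + 2) / ((n+2).factorial : ℝ) :=
    (summable_nat_add_iff 2).mpr (Real.summable_pow_div_factorial _)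
  calc ‖myP L α‖ ≤ ∑' n : ℕ, ‖(α ^ (n + 2) / ((n+2).factorial : ℝ) : ℝ) • L ^ (n + 1)‖ :=
        norm_tsum_le_tsum_norm (myP_summable_norm L α)
    _ ≤ ∑' n : ℕ, c ^ (n + 2) / ((n+2).factorial : ℝ) := by
        apply Summable.tsum_le_tsum (myP_term_norm_le L α) (myP_summable_norm L α) hsum
    _ ≤ ∑' n : ℕ, c ^ 2 * (c ^ n / (n.factorial : ℝ)) := by
        apply Summable.tsum_le_tsum _ hsum ((Real.summable_pow_div_factorial c).mul_left _)
        intro n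
        rw [pow_add, mul_comm (c ^ n), mul_div_assoc]
        gcongr
        exact Nat.le_add_right n 2
    _ = c ^ 2 * Real.exp c := by
        rw [tsum_mul_left]
        congr 1
        rw [Real.exp_eq_exp_ℝ, NormedSpace.exp_eq_tsum_div]

set_option synthInstance.maxHeartbeats 800000 in
lemma exp_smul_eq [CompleteSpace H] (L : H →L[ℝ] H) (α : ℝ) :
    NormedSpace.exp (α • L) = 1 + α • L + myP L α * L := by
  have hterm : ∀ n : ℕ, ((n.factorial : ℝ)⁻¹) • (α • L) ^ n
      = (α ^ n / (n.factorial : ℝ)) • L ^ n := by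
    intro n
    rw [smul_pow, smul_smul, div_eq_mul_inv, mul_comm]
  have hsum : Summable fun n : ℕ => (α ^ n / (n.factorial : ℝ)) • L ^ n := by
    have h := NormedSpace.expSeries_summable' (𝕂 := ℝ) (α • L)
    exact (summable_congr hterm).mp h
  have h0 : NormedSpace.exp (α • L) = ∑' n : ℕ, (α ^ n / (n.factorial : ℝ)) • L ^ n := by
    rw [NormedSpace.exp_eq_tsum ℝ]
    exact tsum_congr hterm
  have hshift := Summable.sum_add_tsum_nat_add 2 hsum
  have hmul : myP L α * L
      = ∑' n : ℕ, (α ^ (n + 2) / ((n+2).factorial : ℝ)) • L ^ (n + 2) := by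
    rw [myP, ← (myP_summable L α).tsum_mul_right]
    refine tsum_congr fun n => ?_
    ext x
    simp [ContinuousLinearMap.mul_apply, pow_succ]
  have hrange : ∑ i ∈ Finset.range 2, (α ^ i / (i.factorial : ℝ)) • L ^ i
      = 1 + α • L := by
    simp [Finset.sum_range_succ, Nat.factorial]
  rw [h0, ← hshift, hrange, hmul]

set_option maxHeartbeats 2000000 in
/-- If `A` is self-adjoint Hilbert–Schmidt with `I + A` positive definite and
`L = log(I + A)`, then `‖(I+A)^α − I‖²_HS / α² → ‖log(I+A)‖²_HS` as `α → 0`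
(equivalently, `(‖(I+A)^α‖²_eHS − 1)/α²` tends to the same limit, since
`‖B + I‖²_eHS = ‖B‖²_HS + 1`). -/
theorem stmt16 [CompleteSpace H] (b : HilbertBasis ℕ ℝ H)
    (A : H →L[ℝ] H) (hA : IsHS b A) (hsA : IsSelfAdjoint A)
    (hpA : ∃ c > (0 : ℝ), ∀ x : H, c * ‖x‖ ^ 2 ≤ ⟪(1 + A) x, x⟫)
    (L : H →L[ℝ] H) (hL : IsHS b L) (hsL : IsSelfAdjoint L)
    (hexp : NormedSpace.exp L = 1 + A) :
    Filter.Tendsto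
      (fun α : ℝ => (∑' i, ‖(NormedSpace.exp (α • L) - 1) (b i)‖ ^ 2) / α ^ 2)
      (𝓝[≠] (0 : ℝ)) (𝓝 (∑' i, ‖L (b i)‖ ^ 2)) := by
  classical
  have hLs : Summable fun i => ‖L (b i)‖ ^ 2 := hL
  set S := ∑' i, ‖L (b i)‖ ^ 2 with hSdef
  have hS0 : 0 ≤ S := tsum_nonneg fun i => sq_nonneg _
  set K : ℝ := (‖L‖ + 1) ^ 2 * Real.exp (‖L‖ + 1) with hKdef
  have hK0 : 0 ≤ K := by positivity
  rw [← tendsto_sub_nhds_zero_iff]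
  have hg : Filter.Tendsto (fun α : ℝ => K * (2 * |α| + α ^ 2 * K) * S)
      (𝓝[≠] (0:ℝ)) (𝓝 0) := by
    have hcont : Continuous fun α : ℝ => K * (2 * |α| + α ^ 2 * K) * S := by
      fun_prop
    have h := hcont.tendsto 0
    simp only [abs_zero, mul_zero, zero_mul, ne_eq, OfNat.ofNat_ne_zero,
      not_false_eq_true, zero_pow, add_zero, zero_add] at h
    exact h.mono_left nhdsWithin_le_nhds
  apply squeeze_zero_norm' _ hg
  have hev : ∀ᶠ α : ℝ in 𝓝[≠] (0:ℝ), |α| ≤ 1 ∧ α ≠ 0 := by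
    filter_upwards [nhdsWithin_le_nhds (Metric.closedBall_mem_nhds (0:ℝ) one_pos),
      self_mem_nhdsWithin] with α h1 h2
    refine ⟨?_, h2⟩
    simpa [Real.dist_eq] using h1
  filter_upwards [hev] with α hα
  obtain ⟨hα1, hα0⟩ := hα
  set m := ‖myP L α‖ with hmdef
  have hm0 : 0 ≤ m := norm_nonneg _
  have hmK : m ≤ α ^ 2 * K := by
    have h2 : (|α| * (‖L‖ + 1)) ^ 2 = α ^ 2 * (‖L‖ + 1) ^ 2 := by
      rw [mul_pow, sq_abs]
    have h3 : Real.exp (|α| * (‖L‖ + 1)) ≤ Real.exp (‖L‖ + 1) := by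
      apply Real.exp_le_exp.mpr
      nlinarith [abs_nonneg α, norm_nonneg L]
    calc m ≤ (|α| * (‖L‖ + 1)) ^ 2 * Real.exp (|α| * (‖L‖ + 1)) := myP_norm_le L α
      _ ≤ (|α| * (‖L‖ + 1)) ^ 2 * Real.exp (‖L‖ + 1) := by
          apply mul_le_mul_of_nonneg_left h3 (by positivity)
      _ = α ^ 2 * K := by rw [h2, hKdef]; ring
  have heq : NormedSpace.exp (α • L) - 1 = α • L + myP L α * L := by
    rw [exp_smul_eq]; abel
  have hub : ∀ i, |‖(NormedSpace.exp (α • L) - 1) (b i)‖ - |α| * ‖L (b i)‖|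
      ≤ m * ‖L (b i)‖ := by
    intro i
    rw [heq]
    have happ : (α • L + myP L α * L) (b i) = α • L (b i) + myP L α (L (b i)) := by
      simp
    rw [happ]
    have h4 := abs_norm_sub_norm_le (α • L (b i) + myP L α (L (b i))) (α • L (b i))
    rw [add_sub_cancel_left] at h4
    have h5 : ‖α • L (b i)‖ = |α| * ‖L (b i)‖ := by
      rw [norm_smul, Real.norm_eq_abs]
    rw [h5] at h4
    exact h4.trans ((myP L α).le_opNorm _)
  have hkey : ∀ i, |‖(NormedSpace.exp (α • L) - 1) (b i)‖ ^ 2 - α ^ 2 * ‖L (b i)‖ ^ 2|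
      ≤ m * (2 * |α| + m) * ‖L (b i)‖ ^ 2 := by
    intro i
    have h := abs_le.mp (hub i)
    have hu0 : 0 ≤ ‖(NormedSpace.exp (α • L) - 1) (b i)‖ := norm_nonneg _
    have hv0 : 0 ≤ ‖L (b i)‖ := norm_nonneg _
    have ha0 : 0 ≤ |α| := abs_nonneg α
    have hsq : α ^ 2 = |α| ^ 2 := (sq_abs α).symm
    rw [hsq, abs_le]
    constructor <;> nlinarith [h.1, h.2, mul_nonneg ha0 hv0, mul_nonneg hm0 hv0]
  have hle : ∀ i, ‖(NormedSpace.exp (α • L) - 1) (b i)‖ ≤ (|α| + m) * ‖L (b i)‖ := by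
    intro i
    have h := (abs_le.mp (hub i)).2
    nlinarith [norm_nonneg (L (b i))]
  have husum : Summable fun i => ‖(NormedSpace.exp (α • L) - 1) (b i)‖ ^ 2 := by
    apply Summable.of_nonneg_of_le (fun i => sq_nonneg _) (fun i => ?_)
      (hLs.mul_left ((|α| + m) ^ 2))
    calc ‖(NormedSpace.exp (α • L) - 1) (b i)‖ ^ 2
        ≤ ((|α| + m) * ‖L (b i)‖) ^ 2 := by
          apply pow_le_pow_left₀ (norm_nonneg _) (hle i)
      _ = (|α| + m) ^ 2 * ‖L (b i)‖ ^ 2 := by ring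
  have habs_sum : Summable fun i =>
      |‖(NormedSpace.exp (α • L) - 1) (b i)‖ ^ 2 - α ^ 2 * ‖L (b i)‖ ^ 2| :=
    Summable.of_nonneg_of_le (fun i => abs_nonneg _) hkey
      (hLs.mul_left (m * (2 * |α| + m)))
  have hmain : |(∑' i, ‖(NormedSpace.exp (α • L) - 1) (b i)‖ ^ 2) - α ^ 2 * S|
      ≤ m * (2 * |α| + m) * S := by
    rw [hSdef, ← tsum_mul_left, ← Summable.tsum_sub husum (hLs.mul_left (α ^ 2))]
    calc |∑' i, (‖(NormedSpace.exp (α • L) - 1) (b i)‖ ^ 2 - α ^ 2 * ‖L (b i)‖ ^ 2)|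
        ≤ ∑' i, |‖(NormedSpace.exp (α • L) - 1) (b i)‖ ^ 2 - α ^ 2 * ‖L (b i)‖ ^ 2| := by
          have hn := norm_tsum_le_tsum_norm
            (f := fun i => ‖(NormedSpace.exp (α • L) - 1) (b i)‖ ^ 2 - α ^ 2 * ‖L (b i)‖ ^ 2)
            (by simpa only [Real.norm_eq_abs] using habs_sum)
          simpa only [Real.norm_eq_abs] using hn
      _ ≤ ∑' i, m * (2 * |α| + m) * ‖L (b i)‖ ^ 2 :=
          Summable.tsum_le_tsum hkey habs_sum (hLs.mul_left _)
      _ = m * (2 * |α| + m) * ∑' i, ‖L (b i)‖ ^ 2 := tsum_mul_left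
  have hα2 : (0:ℝ) < α ^ 2 := by positivity
  rw [Real.norm_eq_abs]
  have hrw : (∑' i, ‖(NormedSpace.exp (α • L) - 1) (b i)‖ ^ 2) / α ^ 2 - S
      = ((∑' i, ‖(NormedSpace.exp (α • L) - 1) (b i)‖ ^ 2) - α ^ 2 * S) / α ^ 2 := by
    field_simp
  rw [hrw, abs_div, abs_of_pos hα2, div_le_iff₀ hα2]
  calc |(∑' i, ‖(NormedSpace.exp (α • L) - 1) (b i)‖ ^ 2) - α ^ 2 * S|
      ≤ m * (2 * |α| + m) * S := hmain
    _ ≤ (α ^ 2 * K) * (2 * |α| + α ^ 2 * K) * S := by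
        gcongr
    _ = K * (2 * |α| + α ^ 2 * K) * S * α ^ 2 := by ring
end
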